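/- Let f ∈ H_{n,2d} satisfy f ∉ Σ_{n,2d} + C_{n,2d}. Then, regarded as a form in n+m variables (not involving the new variables), f is not in Σ_{n+m,2d} + C_{n+m,2d} for any m ∈ ℕ. -/

import Mathlib

open MvPolynomial

/-- Embed an exponent vector into `ℝⁿ`. -/
def expToVec {n : ℕ} (α : Fin n →₀ ℕ) : Fin n → ℝ := fun i => (α i : ℝ)

/-- `h` is a nonnegative circuit form of degree `d` in `n` variables: it is
homogeneous of degree `d`, nonnegative, its support consists of a set `S` of
affinely independent even exponent vectors with positive coefficients
(the outer terms), possibly together with one additional exponent `β` lying in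
the relative interior of the convex hull of `S` (the inner term). -/
def IsNonnegCircuit {n : ℕ} (d : ℕ) (h : MvPolynomial (Fin n) ℝ) : Prop :=
  h.IsHomogeneous d ∧ (∀ x : Fin n → ℝ, 0 ≤ eval x h) ∧
  ∃ S : Finset (Fin n →₀ ℕ),
    (∀ α ∈ S, (∀ i, Even (α i)) ∧ 0 < coeff α h) ∧
    AffineIndependent ℝ (fun a : {α : (Fin n →₀ ℕ) // α ∈ S} => expToVec a.1) ∧
    ((h.support : Set (Fin n →₀ ℕ)) = ↑S ∨
      ∃ β : Fin n →₀ ℕ, β ∉ S ∧ (h.support : Set (Fin n →₀ ℕ)) = insert β ↑S ∧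
        expToVec β ∈ intrinsicInterior ℝ (convexHull ℝ (expToVec '' ↑S)))

/-- `f` is a sum of squares of forms of degree `d` (hence a form of degree `2d`). -/
def IsSOSForm {n : ℕ} (d : ℕ) (f : MvPolynomial (Fin n) ℝ) : Prop :=
  ∃ (k : ℕ) (g : Fin k → MvPolynomial (Fin n) ℝ),
    (∀ i, (g i).IsHomogeneous d) ∧ f = ∑ i, (g i) ^ 2

/-- `f` is a sum of nonnegative circuit forms of degree `d` (SONC). -/
def IsSONC {n : ℕ} (d : ℕ) (f : MvPolynomial (Fin n) ℝ) : Prop :=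
  ∃ (k : ℕ) (h : Fin k → MvPolynomial (Fin n) ℝ),
    (∀ i, IsNonnegCircuit d (h i)) ∧ f = ∑ i, h i

namespace SoncAux

open Set Topology

noncomputable def proj (n m : ℕ) : MvPolynomial (Fin (n + m)) ℝ →ₐ[ℝ] MvPolynomial (Fin n) ℝ :=
  aeval (fun i : Fin (n + m) => if h : (i : ℕ) < n then X ⟨(i : ℕ), h⟩ else 0)

def castE (n m : ℕ) : Fin n ↪ Fin (n + m) :=
  ⟨Fin.castAdd m, Fin.castAdd_injective n m⟩

noncomputable def embF (n m : ℕ) : (Fin n →₀ ℕ) → (Fin (n + m) →₀ ℕ) :=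
  Finsupp.embDomain (castE n m)

lemma embF_injective (n m : ℕ) : Function.Injective (embF n m) :=
  Finsupp.embDomain_injective _

lemma proj_rename (n m : ℕ) (p : MvPolynomial (Fin n) ℝ) :
    proj n m (rename (Fin.castAdd m) p) = p := by
  rw [proj, aeval_rename]
  have h : ((fun i : Fin (n + m) =>
      if h : (i : ℕ) < n then (X ⟨(i : ℕ), h⟩ : MvPolynomial (Fin n) ℝ) else 0)
        ∘ Fin.castAdd m) = X := by
    funext i
    have hi : ((Fin.castAdd m i : Fin (n + m)) : ℕ) < n := by
      simpa using i.isLt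
    simp only [Function.comp_apply, dif_pos hi]
    congr 1
  rw [h, aeval_X_left_apply]

lemma proj_monomial_emb (n m : ℕ) (α : Fin n →₀ ℕ) (a : ℝ) :
    proj n m (monomial (embF n m α) a) = monomial α a := by
  have h : (monomial (embF n m α) a : MvPolynomial (Fin (n + m)) ℝ)
      = rename (Fin.castAdd m) (monomial α a) := by
    rw [rename_monomial, embF, Finsupp.embDomain_eq_mapDomain]
    rfl
  rw [h, proj_rename]

lemma mem_range_embF {n m : ℕ} {β : Fin (n + m) →₀ ℕ} :
    β ∈ Set.range (embF n m) ↔ ∀ j : Fin (n + m), n ≤ (j : ℕ) → β j = 0 := by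
  constructor
  · rintro ⟨α, rfl⟩ j hj
    apply Finsupp.embDomain_notin_range
    rintro ⟨i, rfl⟩
    have h2 : ((castE n m i : Fin (n + m)) : ℕ) = (i : ℕ) := rfl
    rw [h2] at hj
    exact absurd i.isLt (not_lt.2 hj)
  · intro hβ
    refine ⟨Finsupp.comapDomain (Fin.castAdd m) β ((Fin.castAdd_injective n m).injOn), ?_⟩
    ext j
    by_cases hj : (j : ℕ) < n
    · have hje : j = castE n m ⟨(j : ℕ), hj⟩ := by ext; rfl
      rw [hje, embF, Finsupp.embDomain_apply_self, Finsupp.comapDomain_apply]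
      rfl
    · rw [embF, Finsupp.embDomain_notin_range, hβ j (le_of_not_gt hj)]
      rintro ⟨i, rfl⟩
      exact hj i.isLt

lemma proj_monomial_notmem {n m : ℕ} {β : Fin (n + m) →₀ ℕ} (hβ : β ∉ Set.range (embF n m))
    (a : ℝ) : proj n m (monomial β a) = 0 := by
  rw [mem_range_embF] at hβ
  push_neg at hβ
  obtain ⟨j, hj, hjβ⟩ := hβ
  rw [proj, aeval_monomial, Finsupp.prod]
  have h0 : ∏ i ∈ β.support,
      (if h : (i : ℕ) < n then (X ⟨(i : ℕ), h⟩ : MvPolynomial (Fin n) ℝ) else 0) ^ β i = 0 := by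
    apply Finset.prod_eq_zero (Finsupp.mem_support_iff.2 hjβ)
    rw [dif_neg (not_lt.2 hj), zero_pow hjβ]
  rw [h0, mul_zero]

lemma coeff_proj (n m : ℕ) (p : MvPolynomial (Fin (n + m)) ℝ) (α : Fin n →₀ ℕ) :
    coeff α (proj n m p) = coeff (embF n m α) p := by
  conv_lhs => rw [← p.support_sum_monomial_coeff]
  rw [map_sum, coeff_sum]
  rw [Finset.sum_eq_single (embF n m α)]
  · rw [proj_monomial_emb, coeff_monomial, if_pos rfl]
  · intro b _ hne
    by_cases hbr : b ∈ Set.range (embF n m)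
    · obtain ⟨γ, rfl⟩ := hbr
      rw [proj_monomial_emb, coeff_monomial, if_neg]
      intro h
      exact hne (by rw [h])
    · rw [proj_monomial_notmem hbr, coeff_zero]
  · intro hns
    rw [notMem_support_iff.mp hns, monomial_zero, map_zero, coeff_zero]

lemma support_proj (n m : ℕ) (p : MvPolynomial (Fin (n + m)) ℝ) :
    (proj n m p).support = p.support.preimage (embF n m) ((embF_injective n m).injOn) := by
  ext α
  simp [mem_support_iff, coeff_proj, Finset.mem_preimage]

lemma degree_embF (n m : ℕ) (d : Fin n →₀ ℕ) : (embF n m d).degree = d.degree := by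
  simp [Finsupp.degree_apply, embF, Finsupp.support_embDomain, Finset.sum_map,
    Finsupp.embDomain_apply]

lemma proj_isHomogeneous {n m D : ℕ} {p : MvPolynomial (Fin (n + m)) ℝ}
    (hp : p.IsHomogeneous D) : (proj n m p).IsHomogeneous D := by
  intro d hd
  rw [coeff_proj] at hd
  have h2 := hp hd
  calc (Finsupp.weight 1) d = d.degree := (DFunLike.congr_fun Finsupp.degree_eq_weight_one d).symm
    _ = (embF n m d).degree := (degree_embF n m d).symm
    _ = (Finsupp.weight 1) (embF n m d) := DFunLike.congr_fun Finsupp.degree_eq_weight_one _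
    _ = D := h2

lemma eval_proj (n m : ℕ) (p : MvPolynomial (Fin (n + m)) ℝ) (x : Fin n → ℝ) :
    eval x (proj n m p)
      = eval (fun j : Fin (n + m) => if h : (j : ℕ) < n then x ⟨(j : ℕ), h⟩ else 0) p := by
  have h : (eval x).comp ((proj n m) : MvPolynomial (Fin (n + m)) ℝ →+* MvPolynomial (Fin n) ℝ)
      = eval (fun j : Fin (n + m) => if h : (j : ℕ) < n then x ⟨(j : ℕ), h⟩ else 0) := by
    apply ringHom_ext
    · intro r
      simp [proj]
    · intro j
      simp only [RingHom.coe_comp, Function.comp_apply, AlgHom.coe_toRingHom, proj, aeval_X,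
        eval_X]
      split_ifs with hj
      · simp
      · simp
  exact RingHom.congr_fun h p

/-- Extend-by-zero linear map `ℝⁿ → ℝ^{n+m}`. -/
noncomputable def extLin (n m : ℕ) : (Fin n → ℝ) →ₗ[ℝ] (Fin (n + m) → ℝ) where
  toFun v := fun j => if h : (j : ℕ) < n then v ⟨(j : ℕ), h⟩ else 0
  map_add' v w := by funext j; by_cases h : (j : ℕ) < n <;> simp [h]
  map_smul' r v := by funext j; by_cases h : (j : ℕ) < n <;> simp [h]

lemma extLin_norm (n m : ℕ) (v : Fin n → ℝ) : ‖extLin n m v‖ = ‖v‖ := by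
  apply le_antisymm
  · rw [pi_norm_le_iff_of_nonneg (norm_nonneg v)]
    intro j
    show ‖if h : (j : ℕ) < n then v ⟨(j : ℕ), h⟩ else 0‖ ≤ ‖v‖
    split_ifs with h
    · exact norm_le_pi_norm v _
    · simp
  · rw [pi_norm_le_iff_of_nonneg (norm_nonneg _)]
    intro i
    have h : v i = extLin n m v (Fin.castAdd m i) := by
      have hi : ((Fin.castAdd m i : Fin (n + m)) : ℕ) < n := by simpa using i.isLt
      show v i = if h : _ then v ⟨((Fin.castAdd m i : Fin (n + m)) : ℕ), h⟩ else 0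
      rw [dif_pos hi]
      congr 1
    rw [h]
    exact norm_le_pi_norm _ _

noncomputable def extIso (n m : ℕ) : (Fin n → ℝ) →ₗᵢ[ℝ] (Fin (n + m) → ℝ) :=
  ⟨extLin n m, extLin_norm n m⟩

noncomputable def extAff (n m : ℕ) : (Fin n → ℝ) →ᵃⁱ[ℝ] (Fin (n + m) → ℝ) :=
  (extIso n m).toAffineIsometry

lemma extAff_injective (n m : ℕ) : Function.Injective (extAff n m) :=
  (extIso n m).injective

lemma expToVec_embF (n m : ℕ) (α : Fin n →₀ ℕ) :
    expToVec (embF n m α) = extAff n m (expToVec α) := by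
  funext j
  show ((embF n m α) j : ℝ) = extLin n m (expToVec α) j
  show _ = if h : (j : ℕ) < n then expToVec α ⟨(j : ℕ), h⟩ else 0
  by_cases hj : (j : ℕ) < n
  · rw [dif_pos hj]
    exact congrArg _ (Finsupp.embDomain_apply_self (castE n m) α ⟨(j : ℕ), hj⟩)
  · rw [dif_neg hj, embF, Finsupp.embDomain_notin_range]
    · simp
    · rintro ⟨i, rfl⟩
      exact hj i.isLt

/-- A nonnegative affine functional on a convex hull vanishing at a point of the
intrinsic interior vanishes on the whole set. -/
lemma affine_eq_zero_of_relint {E : Type*} [NormedAddCommGroup E] [NormedSpace ℝ E]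
    (V : Set E) (φ : E →ᵃ[ℝ] ℝ) (hV : ∀ v ∈ V, 0 ≤ φ v) {x : E}
    (hx : x ∈ intrinsicInterior ℝ (convexHull ℝ V)) (hx0 : φ x = 0) :
    ∀ v ∈ V, φ v = 0 := by
  set K := convexHull ℝ V with hK
  have hKφ : ∀ y ∈ K, 0 ≤ φ y := by
    intro y hy
    have hsub : K ⊆ φ ⁻¹' Set.Ici 0 :=
      convexHull_min (fun v hv => hV v hv) ((convex_Ici (0 : ℝ)).affine_preimage φ)
    exact hsub hy
  intro v hv
  by_contra hne
  have hvpos : 0 < φ v := lt_of_le_of_ne (hV v hv) (Ne.symm hne)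
  have hvK : v ∈ K := subset_convexHull ℝ V hv
  obtain ⟨b, hb, hbx⟩ := mem_intrinsicInterior.mp hx
  have hxK : x ∈ K := intrinsicInterior_subset hx
  have hxspan : x ∈ affineSpan ℝ K := subset_affineSpan ℝ K hxK
  have hvspan : v ∈ affineSpan ℝ K := subset_affineSpan ℝ K hvK
  have hmem : ∀ t : ℝ, AffineMap.lineMap v x t ∈ affineSpan ℝ K := fun t =>
    AffineSubspace.smul_vsub_vadd_mem _ t hxspan hvspan hvspan
  set c : ℝ → affineSpan ℝ K := fun t => ⟨AffineMap.lineMap v x t, hmem t⟩ with hc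
  have hcont : Continuous c := by
    apply Continuous.subtype_mk
    exact AffineMap.lineMap_continuous
  have hc1 : c 1 = b := by
    apply Subtype.ext
    simp [hc, AffineMap.lineMap_apply_one, hbx]
  have hopen : IsOpen (c ⁻¹' interior (((↑) : affineSpan ℝ K → E) ⁻¹' K)) :=
    isOpen_interior.preimage hcont
  have h1 : (1 : ℝ) ∈ c ⁻¹' interior (((↑) : affineSpan ℝ K → E) ⁻¹' K) := by
    rw [Set.mem_preimage, hc1]; exact hb
  have hmem2 : (c ⁻¹' interior (((↑) : affineSpan ℝ K → E) ⁻¹' K)) ∩ Set.Ioi 1 ∈ 𝓝[>] (1 : ℝ) :=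
    Filter.inter_mem (mem_nhdsWithin_of_mem_nhds (hopen.mem_nhds h1)) self_mem_nhdsWithin
  obtain ⟨t, htW, ht1⟩ := Filter.nonempty_of_mem hmem2
  have htK' : c t ∈ (Subtype.val ⁻¹' K : Set (affineSpan ℝ K)) := interior_subset htW
  have htK : AffineMap.lineMap v x t ∈ K := htK'
  have hval : φ (AffineMap.lineMap v x t) = (1 - t) * φ v := by
    rw [AffineMap.apply_lineMap, AffineMap.lineMap_apply_module, hx0]
    simp [smul_eq_mul]
  have hge := hKφ _ htK
  rw [hval] at hge
  have ht1' : (1 : ℝ) < t := ht1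
  nlinarith

lemma circuit_proj {n m D : ℕ} {h : MvPolynomial (Fin (n + m)) ℝ}
    (hc : IsNonnegCircuit D h) : IsNonnegCircuit D (proj n m h) := by
  obtain ⟨hhom, hnn, S, hS, haff, hsupp⟩ := hc
  set T := S.preimage (embF n m) ((embF_injective n m).injOn) with hT
  have hTmem : ∀ {α}, α ∈ T ↔ embF n m α ∈ S := fun {α} => Finset.mem_preimage
  have hTcoe : (T : Set (Fin n →₀ ℕ)) = embF n m ⁻¹' (S : Set _) := Finset.coe_preimage _ _
  have hsup_set : ((proj n m h).support : Set (Fin n →₀ ℕ))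
      = embF n m ⁻¹' (h.support : Set _) := by
    rw [support_proj]
    exact Finset.coe_preimage _ _
  refine ⟨proj_isHomogeneous hhom, ?_, T, ?_, ?_, ?_⟩
  · intro x
    rw [eval_proj]
    exact hnn _
  · intro α hα
    obtain ⟨heven, hpos⟩ := hS _ (hTmem.mp hα)
    constructor
    · intro i
      have he := heven (castE n m i)
      rwa [embF, Finsupp.embDomain_apply_self] at he
    · rw [coeff_proj]
      exact hpos
  · -- affine independence
    have he : ∀ a : {α // α ∈ T}, embF n m a.1 ∈ S := fun a => hTmem.mp a.2
    have h2 := haff.comp_embedding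
      (⟨fun a : {α // α ∈ T} => (⟨embF n m a.1, he a⟩ : {α // α ∈ S}), by
        intro a b hab
        exact Subtype.ext (embF_injective n m (congrArg Subtype.val hab))⟩ :
        {α // α ∈ T} ↪ {α // α ∈ S})
    have h3 : (fun a : {α // α ∈ T} => expToVec (embF n m a.1))
        = ((extAff n m).toAffineMap : (Fin n → ℝ) →ᵃ[ℝ] (Fin (n + m) → ℝ))
            ∘ (fun a : {α // α ∈ T} => expToVec a.1) := by
      funext a
      exact expToVec_embF n m a.1
    apply AffineIndependent.of_comp ((extAff n m).toAffineMap)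
    rw [← h3]
    exact h2
  · rcases hsupp with hA | ⟨β, hβS, hsupins, hβint⟩
    · left
      rw [hsup_set, hA, hTcoe]
    · by_cases hβr : β ∈ Set.range (embF n m)
      · -- inner term survives
        obtain ⟨β', rfl⟩ := hβr
        right
        -- every outer exponent is supported on the first n variables
        have hall : ∀ α ∈ S, ∀ j : Fin m, α (Fin.natAdd n j) = 0 := by
          intro α hα j
          have hzero := affine_eq_zero_of_relint (expToVec '' (S : Set (Fin (n + m) →₀ ℕ)))
            ((LinearMap.proj (Fin.natAdd n j) :
              (Fin (n + m) → ℝ) →ₗ[ℝ] ℝ).toAffineMap)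
            (by
              rintro v ⟨γ, _, rfl⟩
              exact Nat.cast_nonneg _)
            hβint
            (by
              show expToVec (embF n m β') (Fin.natAdd n j) = 0
              show ((embF n m β') (Fin.natAdd n j) : ℝ) = 0
              rw [embF, Finsupp.embDomain_notin_range]
              · simp
              · rintro ⟨i, hi⟩
                have h2 : (i : ℕ) = n + (j : ℕ) := congrArg Fin.val hi
                have h4 := i.isLt
                omega)
          have hz := hzero _ ⟨α, hα, rfl⟩
          have hz' : ((α (Fin.natAdd n j) : ℕ) : ℝ) = 0 := hz
          exact_mod_cast hz'
        have hrange : ∀ α ∈ S, α ∈ Set.range (embF n m) := by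
          intro α hα
          rw [mem_range_embF]
          intro j' hj'
          have hj'2 : (j' : ℕ) - n < m := by omega
          have hje : j' = Fin.natAdd n ⟨(j' : ℕ) - n, hj'2⟩ := by
            ext
            show (j' : ℕ) = n + ((j' : ℕ) - n)
            omega
          rw [hje]
          exact hall α hα _
        have hSimg : (S : Set (Fin (n + m) →₀ ℕ)) = embF n m '' (T : Set _) := by
          ext γ
          constructor
          · intro hγ
            obtain ⟨α, rfl⟩ := hrange γ hγ
            exact ⟨α, by rwa [hTcoe, Set.mem_preimage], rfl⟩
          · rintro ⟨α, hα, rfl⟩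
            rw [hTcoe, Set.mem_preimage] at hα
            exact hα
        refine ⟨β', fun hmem => hβS (hTmem.mp hmem), ?_, ?_⟩
        · rw [hsup_set, hsupins]
          ext α
          simp only [Set.mem_preimage, Set.mem_insert_iff, (embF_injective n m).eq_iff,
            Finset.coe_preimage]
          rw [hTcoe]
          simp
        · -- the relative interior condition
          have himg : expToVec '' (S : Set (Fin (n + m) →₀ ℕ))
              = (extAff n m) '' (expToVec '' (T : Set (Fin n →₀ ℕ))) := by
            rw [hSimg, Set.image_image, Set.image_image]
            apply Set.image_congr
            intro α _
            exact expToVec_embF n m α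
          have hmem := hβint
          rw [himg, ← AffineIsometry.coe_toAffineMap,
            ← AffineMap.image_convexHull, AffineIsometry.coe_toAffineMap,
            AffineIsometry.image_intrinsicInterior] at hmem
          obtain ⟨z, hz, hze⟩ := hmem
          have hzeq : z = expToVec β' := by
            apply extAff_injective n m
            rw [hze, expToVec_embF]
          rwa [hzeq] at hz
      · -- inner term dies
        left
        rw [hsup_set, hsupins, hTcoe]
        ext α
        simp only [Set.mem_preimage, Set.mem_insert_iff]
        constructor
        · rintro (hc | hc)
          · exact absurd ⟨α, hc⟩ hβr
          · exact hc
        · intro hc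
          exact Or.inr hc

end SoncAux

open SoncAux in
/-- Reduction strategy (variables): if a form `f ∈ H_{n,2d}` is not SOS+SONC, then,
regarded as a form in `n+m` variables via the natural inclusion, it is not in
`Σ_{n+m,2d} + C_{n+m,2d}` for any `m ≥ 1`. -/
theorem sos_plus_sonc_reduction_variables (n d : ℕ) (f : MvPolynomial (Fin n) ℝ)
    (hf : f.IsHomogeneous (2 * d))
    (hnot : ¬ ∃ g c : MvPolynomial (Fin n) ℝ, IsSOSForm d g ∧ IsSONC (2 * d) c ∧ f = g + c) :
    ∀ m : ℕ, 0 < m →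
      ¬ ∃ g c : MvPolynomial (Fin (n + m)) ℝ,
        IsSOSForm d g ∧ IsSONC (2 * d) c ∧
          rename (Fin.castAdd m) f = g + c := by
  intro m _ hex
  obtain ⟨g, c, ⟨k, gs, hgs, hgsum⟩, ⟨l, hs, hhs, hcsum⟩, heq⟩ := hex
  apply hnot
  refine ⟨proj n m g, proj n m c, ?_, ?_, ?_⟩
  · refine ⟨k, fun i => proj n m (gs i), fun i => proj_isHomogeneous (hgs i), ?_⟩
    rw [hgsum, map_sum]
    simp [map_pow]
  · refine ⟨l, fun i => proj n m (hs i), fun i => circuit_proj (hhs i), ?_⟩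
    rw [hcsum, map_sum]
  · rw [← proj_rename n m f, heq, map_add]
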